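/- Let q ≥ 3 be an integer, let s, t ∈ ℂ with s ≠ 0, and let f = (x² + y³)² + s·x²·y^{q+3} + t·x²·y^{q+4} ∈ ℂ[x,y]. Then there exist polynomials α_i, β_i, u_i ∈ ℂ[x,y] (i = 1, 2, 3) with u_i(0,0) ≠ 0 such that: u₁·y^{q+8} = α₁·(∂f/∂x) + β₁·(∂f/∂y); u₂·x·y^{q+6} = α₂·(∂f/∂x) + β₂·(∂f/∂y); and u₃·x^{q+4} = α₃·(∂f/∂x) + β₃·(∂f/∂y). In particular, y^{q+8}, x·y^{q+6} and x^{q+4} belong to the Jacobian ideal of f in the local ring ℂ[x,y] localized at the maximal ideal (x,y). -/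
import Mathlib


open MvPolynomial

/-- The polynomial `f = (x² + y³)² + s x² y^{q+3} + t x² y^{q+4}` (family `W^#_{1,2q}`),
with `x = X 0`, `y = X 1`. -/
noncomputable def fWsharpEven (q : ℕ) (s t : ℂ) : MvPolynomial (Fin 2) ℂ :=
  (X 0 ^ 2 + X 1 ^ 3) ^ 2 + C s * X 0 ^ 2 * X 1 ^ (q + 3) + C t * X 0 ^ 2 * X 1 ^ (q + 4)

/-- For `f = (x² + y³)² + s x² y^{q+3} + t x² y^{q+4}` with `q ≥ 3` and `s ≠ 0`, there
are units `u₁, u₂, u₃` (polynomials with nonzero constant term) and polynomials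
`αᵢ, βᵢ` with `u₁·y^{q+8} = α₁·f_x + β₁·f_y`, `u₂·x y^{q+6} = α₂·f_x + β₂·f_y` and
`u₃·x^{q+4} = α₃·f_x + β₃·f_y`; in particular `y^{q+8}`, `x y^{q+6}` and `x^{q+4}` lie
in the Jacobian ideal of `f` in the local ring at `0`. -/
theorem powers_in_jacobian_WsharpEven (q : ℕ) (hq : 3 ≤ q) (s t : ℂ) (hs : s ≠ 0) :
    (∃ α₁ β₁ u₁ : MvPolynomial (Fin 2) ℂ, MvPolynomial.coeff 0 u₁ ≠ 0 ∧
      u₁ * X 1 ^ (q + 8) =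
        α₁ * pderiv 0 (fWsharpEven q s t) + β₁ * pderiv 1 (fWsharpEven q s t)) ∧
    (∃ α₂ β₂ u₂ : MvPolynomial (Fin 2) ℂ, MvPolynomial.coeff 0 u₂ ≠ 0 ∧
      u₂ * (X 0 * X 1 ^ (q + 6)) =
        α₂ * pderiv 0 (fWsharpEven q s t) + β₂ * pderiv 1 (fWsharpEven q s t)) ∧
    (∃ α₃ β₃ u₃ : MvPolynomial (Fin 2) ℂ, MvPolynomial.coeff 0 u₃ ≠ 0 ∧
      u₃ * X 0 ^ (q + 4) =
        α₃ * pderiv 0 (fWsharpEven q s t) + β₃ * pderiv 1 (fWsharpEven q s t)) := by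
  have hfx : pderiv 0 (fWsharpEven q s t) =
      4*X 0^3 + 4*X 0*X 1^3 + C (2*s) * X 0 * X 1^(q+3) + C (2*t) * X 0 * X 1^(q+4) := by
    simp [fWsharpEven, pderiv_X, pderiv_mul, pderiv_pow, C_mul, map_ofNat]
    ring
  have hfy : pderiv 1 (fWsharpEven q s t) =
      6*X 0^2*X 1^2 + 6*X 1^5 + C ((q+3)*s) * X 0^2 * X 1^(q+2)
        + C ((q+4)*t) * X 0^2 * X 1^(q+3) := by
    simp [fWsharpEven, pderiv_X, pderiv_mul, pderiv_pow, C_mul, C_add, map_ofNat, C_eq_coe_nat]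
    ring
  rw [hfx, hfy]
  set Fx : MvPolynomial (Fin 2) ℂ :=
    4*X 0^3 + 4*X 0*X 1^3 + C (2*s) * X 0 * X 1^(q+3) + C (2*t) * X 0 * X 1^(q+4) with hFx
  set Fy : MvPolynomial (Fin 2) ℂ :=
    6*X 0^2*X 1^2 + 6*X 1^5 + C ((q+3)*s) * X 0^2 * X 1^(q+2)
      + C ((q+4)*t) * X 0^2 * X 1^(q+3) with hFy
  set h : MvPolynomial (Fin 2) ℂ := C ((q+3)*s) + C ((q+4)*t) * X 1 with hh
  set U : MvPolynomial (Fin 2) ℂ :=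
    4*h + 12*(C s + C t * X 1) + 2*h*(C s + C t*X 1)*X 1^q with hU
  have key1 : U * (X 0 * X 1^(q+5)) = (h*X 1^(q+2) + 6*X 1^2) * Fx + (-4*X 0) * Fy := by
    rw [hU, hh, hFx, hFy]
    simp only [C_mul, C_add, map_ofNat, C_eq_coe_nat]
    ring
  have hU0 : MvPolynomial.coeff 0 U ≠ 0 := by
    rw [hU, hh]
    rw [show (0 : Fin 2 →₀ ℕ) = (0 : Fin 2 →₀ ℕ) from rfl]
    rw [← constantCoeff_eq]
    simp only [map_add, map_mul, map_pow, map_ofNat, constantCoeff_C, constantCoeff_X]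
    rw [zero_pow (by omega : q ≠ 0)]
    have hne : (4 * (q:ℂ) + 24) * s ≠ 0 := by
      apply mul_ne_zero _ hs
      have : (4 * (q:ℂ) + 24) = ((4*q+24 : ℕ) : ℂ) := by push_cast; ring
      rw [this]
      exact_mod_cast (by omega : 4*q+24 ≠ 0)
    intro h0
    exact hne (by linear_combination h0)
  refine ⟨?_, ?_, ?_⟩
  · -- y^{q+8}
    refine ⟨-(6*X 0 + X 0*X 1^q*h)*(h*X 1^(q+2) + 6*X 1^2),
      U*X 1^(q+3) + (6*X 0 + X 0*X 1^q*h)*(4*X 0), 6*U, ?_, ?_⟩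
    · rw [← constantCoeff_eq] at hU0 ⊢
      simp only [map_mul, map_ofNat]
      exact mul_ne_zero (by norm_num) hU0
    · linear_combination (-(6*X 0 + X 0*X 1^q*h)) * key1
  · -- x y^{q+6}
    refine ⟨X 1*(h*X 1^(q+2) + 6*X 1^2), X 1*(-4*X 0), U, hU0, ?_⟩
    linear_combination X 1 * key1
  · -- x^{q+4}
    set v : MvPolynomial (Fin 2) ℂ := 4 + C (2*s) * X 1^q + C (2*t) * X 1^(q+1) with hv
    have ind : ∀ n : ℕ, ∃ a b : MvPolynomial (Fin 2) ℂ,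
        (-4 : MvPolynomial (Fin 2) ℂ)^(n+1) * X 0^(2*n+3) - X 0 * X 1^(3*n+3) * v^(n+1)
          = a * Fx + b * Fy := by
      intro n
      induction n with
      | zero =>
        refine ⟨-1, 0, ?_⟩
        rw [hv, hFx, hFy]
        simp only [C_mul, C_add, map_ofNat, C_eq_coe_nat]
        ring
      | succ n ih =>
        obtain ⟨a, b, hab⟩ := ih
        refine ⟨-4*X 0^2*a - X 1^(3*n+3)*v^(n+1), -4*X 0^2*b, ?_⟩
        rw [hv, hFx, hFy] at hab ⊢
        linear_combination (-4*X 0^2) * hab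
    rcases Nat.even_or_odd q with ⟨m, hm⟩ | ⟨m, hm⟩
    · -- even : q = m + m, m ≥ 2
      obtain ⟨k, rfl⟩ : ∃ k, q = 2*k+4 := ⟨m-2, by omega⟩
      obtain ⟨a, b, hab⟩ := ind (k+2)
      refine ⟨U*X 0*a + X 0*v^(k+3)*X 1^k*(h*X 1^(2*k+4+2) + 6*X 1^2),
        U*X 0*b + X 0*v^(k+3)*X 1^k*(-4*X 0),
        (-4 : MvPolynomial (Fin 2) ℂ)^(k+3) * U, ?_, ?_⟩
      · rw [← constantCoeff_eq] at hU0 ⊢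
        simp only [map_mul, map_pow, map_neg, map_ofNat]
        exact mul_ne_zero (pow_ne_zero _ (by norm_num)) hU0
      · linear_combination (U * X 0) * hab + (X 0 * v^(k+3) * X 1^k) * key1
    · -- odd : q = 2m+1
      obtain ⟨a, b, hab⟩ := ind (m+1)
      subst hm
      refine ⟨U*a + v^(m+2)*X 1^m*(h*X 1^(2*m+1+2) + 6*X 1^2),
        U*b + v^(m+2)*X 1^m*(-4*X 0),
        (-4 : MvPolynomial (Fin 2) ℂ)^(m+2) * U, ?_, ?_⟩
      · rw [← constantCoeff_eq] at hU0 ⊢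
        simp only [map_mul, map_pow, map_neg, map_ofNat]
        exact mul_ne_zero (pow_ne_zero _ (by norm_num)) hU0
      · linear_combination U * hab + (v^(m+2) * X 1^m) * key1
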